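/- The spectral radius ρ of M := I − D^{-1}·A·Aᵀ, where A is the reduced incidence matrix of a connected graph with reference node 0 and D is the diagonal matrix of degrees of the non-reference nodes, satisfies ρ(M) ≤ 1 − (κ / Σᵢ dᵢ)², where κ is the edge-connectivity of the graph and dᵢ are the nodal degrees. -/

import Mathlib

open Matrix

/-- The simple graph on `n+1` nodes with edges `E \ F` (edge deletion),
determined by endpoint maps `head, tail`. -/
def graphWithout {n : ℕ} {E : Type*} (head tail : E → Fin (n + 1))
    (F : Finset E) [DecidableEq E] : SimpleGraph (Fin (n + 1)) where
  Adj i j := i ≠ j ∧ ∃ e : E, e ∉ F ∧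
    ((head e = i ∧ tail e = j) ∨ (head e = j ∧ tail e = i))
  symm := by constructor; intro i j ⟨hne, e, heF, he⟩; exact ⟨hne.symm, e, heF, he.symm⟩
  loopless := by constructor; intro i ⟨hne, _⟩; exact hne rfl

/-- The degree of a vertex: the number of edges incident on it. -/
noncomputable def vertexDegree {n : ℕ} {E : Type*} [Fintype E]
    (head tail : E → Fin (n + 1)) (v : Fin (n + 1)) : ℕ :=
  Fintype.card {e : E // head e = v ∨ tail e = v}

/-- The spectral radius of a real square matrix: the supremum of the absolute
values of its (real) eigenvalues. -/
noncomputable def specRad {n : ℕ} (M : Matrix (Fin n) (Fin n) ℝ) : ℝ :=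
  sSup {x : ℝ | ∃ μ : ℝ, x = |μ| ∧ Module.End.HasEigenvalue (Matrix.toLin' M) μ}

/-! ### Auxiliary lemmas -/

lemma cut_card_ge {n : ℕ} {E : Type*} [Fintype E] [DecidableEq E]
    (head tail : E → Fin (n + 1)) {κ : ℕ}
    (hκ : ∀ k ∈ {k : ℕ | ∃ F : Finset E, F.card = k ∧
      ¬ (graphWithout head tail F).Connected}, κ ≤ k)
    (S : Finset (Fin (n + 1))) (h0 : (0 : Fin (n+1)) ∉ S) (hS : S.Nonempty) :
    κ ≤ (Finset.univ.filter fun e => ¬((head e ∈ S) ↔ (tail e ∈ S))).card := by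
  apply hκ
  refine ⟨_, rfl, ?_⟩
  intro hc
  obtain ⟨m, hm⟩ := hS
  have key : ∀ {a b : Fin (n+1)},
      (graphWithout head tail
        (Finset.univ.filter fun e => ¬((head e ∈ S) ↔ (tail e ∈ S)))).Reachable a b →
      (a ∈ S ↔ b ∈ S) := by
    intro a b hr
    obtain ⟨p⟩ := hr
    induction p with
    | nil => exact Iff.rfl
    | cons h p ih =>
      obtain ⟨hne, e, heF, he⟩ := h
      have hiff : head e ∈ S ↔ tail e ∈ S := by
        by_contra hciff
        exact heF (Finset.mem_filter.2 ⟨Finset.mem_univ e, hciff⟩)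
      refine Iff.trans ?_ ih
      rcases he with ⟨h1, h2⟩ | ⟨h1, h2⟩
      · rw [← h1, ← h2]; exact hiff
      · rw [← h2, ← h1]; exact hiff.symm
  have := key (hc.preconnected m 0)
  exact h0 (this.mp hm)

lemma coarea {n : ℕ} {E : Type*} [Fintype E] [DecidableEq E]
    (head tail : E → Fin (n + 1)) {κ : ℕ}
    (hcut : ∀ S : Finset (Fin (n + 1)), (0 : Fin (n+1)) ∉ S → S.Nonempty →
      κ ≤ (Finset.univ.filter fun e => ¬((head e ∈ S) ↔ (tail e ∈ S))).card)
    (u : Fin (n + 1) → ℝ) (hu0 : u 0 = 0) (hupos : ∀ i, 0 ≤ u i) (m : Fin (n + 1)) :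
    (κ : ℝ) * u m ≤ ∑ e : E, |u (head e) - u (tail e)| := by
  suffices H : ∀ (N : ℕ) (u : Fin (n+1) → ℝ),
      (Finset.univ.filter fun i => 0 < u i).card ≤ N →
      u 0 = 0 → (∀ i, 0 ≤ u i) → ∀ m, (κ:ℝ) * u m ≤ ∑ e : E, |u (head e) - u (tail e)| by
    exact H _ u le_rfl hu0 hupos m
  intro N
  induction N with
  | zero =>
    intro u hcard hu0 hpos m
    have hz : ∀ i, u i = 0 := by
      intro i
      by_contra h
      have hlt : 0 < u i := lt_of_le_of_ne (hpos i) (Ne.symm h)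
      have : i ∈ Finset.univ.filter fun i => 0 < u i :=
        Finset.mem_filter.2 ⟨Finset.mem_univ i, hlt⟩
      have := Finset.card_pos.2 ⟨i, this⟩
      omega
    simp [hz]
  | succ N ih =>
    intro u hcard hu0 hpos m
    by_cases hm : u m = 0
    · rw [hm, mul_zero]
      exact Finset.sum_nonneg fun e _ => abs_nonneg _
    have hmpos : 0 < u m := lt_of_le_of_ne (hpos m) (Ne.symm hm)
    set S := Finset.univ.filter fun i => 0 < u i with hSdef
    have hmS : m ∈ S := Finset.mem_filter.2 ⟨Finset.mem_univ m, hmpos⟩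
    have h0S : (0 : Fin (n+1)) ∉ S := by
      intro h
      exact absurd ((Finset.mem_filter.1 h).2) (by rw [hu0]; exact lt_irrefl 0)
    obtain ⟨i₀, hi₀S, hi₀min⟩ := Finset.exists_min_image S u ⟨m, hmS⟩
    set θ := u i₀ with hθdef
    have hθpos : 0 < θ := (Finset.mem_filter.1 hi₀S).2
    have hθm : θ ≤ u m := hi₀min m hmS
    have hSge : ∀ i ∈ S, θ ≤ u i := hi₀min
    have hout : ∀ i, i ∉ S → u i = 0 := by
      intro i hi
      by_contra h
      exact hi (Finset.mem_filter.2 ⟨Finset.mem_univ i,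
        lt_of_le_of_ne (hpos i) (Ne.symm h)⟩)
    set u' := fun i => max (u i - θ) 0 with hu'def
    have hu'0 : u' 0 = 0 := by
      simp [hu'def, hu0]
      exact le_of_lt hθpos
    have hu'pos : ∀ i, 0 ≤ u' i := fun i => le_max_right _ _
    have hu'card : (Finset.univ.filter fun i => 0 < u' i).card ≤ N := by
      have hsub : (Finset.univ.filter fun i => 0 < u' i) ⊆ S.erase i₀ := by
        intro i hi
        have hlt : 0 < u' i := (Finset.mem_filter.1 hi).2
        have hθlt : θ < u i := by
          by_contra h
          push_neg at h
          have : u' i = 0 := max_eq_right (by linarith)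
          rw [this] at hlt; exact lt_irrefl 0 hlt
        refine Finset.mem_erase.2 ⟨?_, Finset.mem_filter.2 ⟨Finset.mem_univ i, by linarith⟩⟩
        intro h; rw [h] at hθlt; exact lt_irrefl _ hθlt
      have h1 : (S.erase i₀).card < S.card := Finset.card_erase_lt_of_mem hi₀S
      have h2 := Finset.card_le_card hsub
      omega
    have hu'm : u' m = u m - θ := max_eq_left (by linarith)
    have hihm := ih u' hu'card hu'0 hu'pos m
    have hcutS := hcut S h0S ⟨m, hmS⟩
    have hpw : ∀ e : E, |u' (head e) - u' (tail e)|
        + θ * (if ¬((head e ∈ S) ↔ (tail e ∈ S)) then 1 else 0)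
        ≤ |u (head e) - u (tail e)| := by
      intro e
      by_cases hh : head e ∈ S <;> by_cases ht : tail e ∈ S
      · have e1 : u' (head e) = u (head e) - θ := max_eq_left (by linarith [hSge _ hh])
        have e2 : u' (tail e) = u (tail e) - θ := max_eq_left (by linarith [hSge _ ht])
        have e3 : u (head e) - θ - (u (tail e) - θ) = u (head e) - u (tail e) := by ring
        rw [e1, e2, e3]
        simp [hh, ht]
      · have e1 : u' (head e) = u (head e) - θ := max_eq_left (by linarith [hSge _ hh])
        have e2 : u (tail e) = 0 := hout _ ht
        have e2' : u' (tail e) = 0 := by simp [hu'def, e2]; linarith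
        rw [e1, e2, e2']
        have h1 : θ ≤ u (head e) := hSge _ hh
        rw [abs_of_nonneg (by linarith : (0:ℝ) ≤ u (head e) - θ - 0),
          abs_of_nonneg (by linarith : (0:ℝ) ≤ u (head e) - 0)]
        simp [hh, ht]
      · have e1 : u' (tail e) = u (tail e) - θ := max_eq_left (by linarith [hSge _ ht])
        have e2 : u (head e) = 0 := hout _ hh
        have e2' : u' (head e) = 0 := by simp [hu'def, e2]; linarith
        rw [e1, e2, e2']
        have h1 : θ ≤ u (tail e) := hSge _ ht
        rw [abs_of_nonpos (by linarith : (0:ℝ) - (u (tail e) - θ) ≤ 0),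
          abs_of_nonpos (by linarith : (0:ℝ) - u (tail e) ≤ 0)]
        simp [hh, ht]
      · have e1 : u (head e) = 0 := hout _ hh
        have e2 : u (tail e) = 0 := hout _ ht
        have e1' : u' (head e) = 0 := by simp [hu'def, e1]; linarith
        have e2' : u' (tail e) = 0 := by simp [hu'def, e2]; linarith
        rw [e1, e2, e1', e2']
        simp [hh, ht]
    have hsum : ∑ e : E, (|u' (head e) - u' (tail e)|
        + θ * (if ¬((head e ∈ S) ↔ (tail e ∈ S)) then 1 else 0))
        ≤ ∑ e : E, |u (head e) - u (tail e)| :=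
      Finset.sum_le_sum fun e _ => hpw e
    rw [Finset.sum_add_distrib, ← Finset.mul_sum] at hsum
    have hind : ∑ e : E, (if ¬((head e ∈ S) ↔ (tail e ∈ S)) then (1:ℝ) else 0)
        = ((Finset.univ.filter fun e => ¬((head e ∈ S) ↔ (tail e ∈ S))).card : ℝ) := by
      rw [Finset.sum_boole]
    rw [hind] at hsum
    have hκcard : (κ : ℝ) ≤ ((Finset.univ.filter
        fun e => ¬((head e ∈ S) ↔ (tail e ∈ S))).card : ℝ) := Nat.cast_le.2 hcutS
    rw [hu'm] at hihm
    nlinarith [hθpos.le]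

lemma cs_bound {E : Type*} [Fintype E] (g : E → ℝ) :
    (∑ e : E, |g e|)^2 ≤ (Fintype.card E : ℝ) * ∑ e : E, g e ^ 2 := by
  have h := Finset.sum_mul_sq_le_sq_mul_sq Finset.univ (fun _ => (1:ℝ)) (fun e => |g e|)
  simpa [sq_abs, Finset.card_univ] using h

lemma sum_ite_succ_eq {n : ℕ} (v : Fin n → ℝ) (x : Fin (n+1)) :
    ∑ i : Fin n, (if x = i.succ then v i else 0) = Fin.cases 0 v x := by
  induction x using Fin.cases with
  | zero => simp [eq_comm, Fin.succ_ne_zero]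
  | succ j =>
    simp only [Fin.succ_inj, Fin.cases_succ]
    rw [Finset.sum_ite_eq Finset.univ j v]
    simp

lemma fiber_sum {n : ℕ} {E : Type*} [Fintype E] [DecidableEq E]
    (b : E → Fin (n+1)) (f : Fin (n+1) → ℝ) :
    ∑ e : E, f (b e)
      = ∑ x : Fin (n+1), ((Finset.univ.filter fun e => b e = x).card : ℝ) * f x := by
  have h1 : ∀ e : E, f (b e) = ∑ x : Fin (n+1), if b e = x then f x else 0 := by
    intro e; rw [Finset.sum_ite_eq]; simp
  simp_rw [h1]
  rw [Finset.sum_comm]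
  refine Finset.sum_congr rfl fun x _ => ?_
  rw [← Finset.sum_filter, Finset.sum_const, nsmul_eq_mul]

lemma degree_split {n : ℕ} {E : Type*} [Fintype E] [DecidableEq E]
    (head tail : E → Fin (n + 1)) (hloop : ∀ e, head e ≠ tail e) (x : Fin (n+1)) :
    vertexDegree head tail x
      = (Finset.univ.filter fun e => head e = x).card
        + (Finset.univ.filter fun e => tail e = x).card := by
  rw [vertexDegree, Fintype.card_subtype, Finset.filter_or,
    Finset.card_union_of_disjoint]
  rw [Finset.disjoint_left]
  intro e he ht
  exact hloop e ((Finset.mem_filter.1 he).2.trans (Finset.mem_filter.1 ht).2.symm)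

set_option maxHeartbeats 1000000 in
/-- **Upper bound on the spectral radius of `M = I − D⁻¹·A·Aᵀ` via
edge-connectivity (Cheeger's inequality).**  `G` is a connected graph on
`n+1` nodes; node `0` is the reference; `A` is the incidence matrix with node
`0`'s row removed; `D = diag(d₁,…,dₙ)` is the diagonal matrix of the degrees
of the non-reference nodes; `κ` is the edge-connectivity of `G`, i.e. the
minimum number of edges whose removal disconnects `G`.  Then
`ρ(M) ≤ 1 − (κ / Σᵢ dᵢ)²`. -/
theorem spectral_radius_upper_bound
    {n : ℕ} {E : Type*} [Fintype E] [DecidableEq E]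
    (head tail : E → Fin (n + 1)) (hloop : ∀ e, head e ≠ tail e)
    (hconn : (graphWithout head tail ∅).Connected)
    (A : Matrix (Fin n) E ℝ)
    (hA : ∀ (i : Fin n) (e : E), A i e =
      (if head e = i.succ then 1 else if tail e = i.succ then -1 else 0 : ℝ))
    (D : Matrix (Fin n) (Fin n) ℝ)
    (hD : D = Matrix.diagonal fun i => (vertexDegree head tail i.succ : ℝ))
    (M : Matrix (Fin n) (Fin n) ℝ) (hM : M = 1 - D⁻¹ * (A * Aᵀ))
    (κ : ℕ)
    (hκ : IsLeast {k : ℕ | ∃ F : Finset E, F.card = k ∧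
      ¬ (graphWithout head tail F).Connected} κ) :
    specRad M ≤ 1 - (κ / ∑ i : Fin n, (vertexDegree head tail i.succ : ℝ)) ^ 2 := by
  -- dispose of the degenerate case `n = 0`
  rcases Nat.eq_zero_or_pos n with hn0 | hn
  · exfalso
    obtain ⟨F, -, hF⟩ := hκ.1
    apply hF
    subst hn0
    refine ⟨fun a b => ?_⟩
    have hab : a = b := by omega
    rw [hab]
  -- setup
  have hcut := fun S h0 hS => cut_card_ge head tail hκ.2 S h0 hS
  set T := ∑ i : Fin n, (vertexDegree head tail i.succ : ℝ) with hT
  -- degrees are positive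
  have hdegpos : ∀ i : Fin n, 0 < vertexDegree head tail i.succ := by
    intro i
    have hadj : ∀ {a : Fin (n+1)}, (graphWithout head tail (∅ : Finset E)).Walk a 0 →
        a ≠ 0 → ∃ bb, (graphWithout head tail (∅ : Finset E)).Adj a bb := by
      intro a p ha
      cases p with
      | nil => exact absurd rfl ha
      | cons h q => exact ⟨_, h⟩
    obtain ⟨p⟩ := hconn.preconnected i.succ 0
    obtain ⟨bb, -, e, -, he⟩ := hadj p (Fin.succ_ne_zero i)
    have : Nonempty {e : E // head e = i.succ ∨ tail e = i.succ} := by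
      rcases he with ⟨h1, h2⟩ | ⟨h1, h2⟩
      · exact ⟨e, Or.inl h1⟩
      · exact ⟨e, Or.inr h2⟩
    exact Fintype.card_pos
  have hdegposR : ∀ i : Fin n, (0:ℝ) < (vertexDegree head tail i.succ : ℝ) :=
    fun i => by exact_mod_cast hdegpos i
  have hTpos : (0:ℝ) < T := by
    rw [hT]
    haveI : Nonempty (Fin n) := ⟨⟨0, hn⟩⟩
    exact Finset.sum_pos (fun i _ => hdegposR i) Finset.univ_nonempty
  have hT0 : T ≠ 0 := ne_of_gt hTpos
  -- κ ≤ T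
  have hκT : (κ:ℝ) ≤ T := by
    set i₁ : Fin n := ⟨0, hn⟩
    have h0x : (0 : Fin (n+1)) ∉ ({i₁.succ} : Finset (Fin (n+1))) := by
      simp [eq_comm, Fin.succ_ne_zero]
    have hcx := hcut {i₁.succ} h0x ⟨i₁.succ, Finset.mem_singleton_self _⟩
    have hsub : (Finset.univ.filter fun e =>
        ¬((head e ∈ ({i₁.succ} : Finset (Fin (n+1)))) ↔ (tail e ∈ ({i₁.succ} : Finset (Fin (n+1))))))
        ⊆ Finset.univ.filter fun e => head e = i₁.succ ∨ tail e = i₁.succ := by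
      intro e he
      have h2 := (Finset.mem_filter.1 he).2
      refine Finset.mem_filter.2 ⟨Finset.mem_univ e, ?_⟩
      by_contra hcon
      push_neg at hcon
      apply h2
      simp [hcon.1, hcon.2]
    have hdb : κ ≤ vertexDegree head tail i₁.succ := by
      rw [vertexDegree, Fintype.card_subtype]
      exact hcx.trans (Finset.card_le_card hsub)
    have hsum : (vertexDegree head tail i₁.succ : ℝ) ≤ T :=
      Finset.single_le_sum (fun i _ => (hdegposR i).le) (Finset.mem_univ i₁)
    calc (κ:ℝ) ≤ (vertexDegree head tail i₁.succ : ℝ) := by exact_mod_cast hdb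
      _ ≤ T := hsum
  -- |E| ≤ T
  have hET : (Fintype.card E : ℝ) ≤ T := by
    have hh : (Finset.univ : Finset E).card
        = ∑ x : Fin (n+1), (Finset.univ.filter fun e => head e = x).card :=
      Finset.card_eq_sum_card_fiberwise fun x _ => Finset.mem_univ _
    have ht : (Finset.univ : Finset E).card
        = ∑ x : Fin (n+1), (Finset.univ.filter fun e => tail e = x).card :=
      Finset.card_eq_sum_card_fiberwise fun x _ => Finset.mem_univ _
    rw [Fin.sum_univ_succ] at hh ht
    have hdisj : Disjoint (Finset.univ.filter fun e => head e = (0:Fin (n+1)))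
        (Finset.univ.filter fun e => tail e = (0:Fin (n+1))) := by
      rw [Finset.disjoint_left]
      intro e he hte
      exact hloop e ((Finset.mem_filter.1 he).2.trans (Finset.mem_filter.1 hte).2.symm)
    have h0le : (Finset.univ.filter fun e => head e = (0:Fin (n+1))).card
        + (Finset.univ.filter fun e => tail e = (0:Fin (n+1))).card ≤ Fintype.card E := by
      rw [← Finset.card_union_of_disjoint hdisj, ← Finset.card_univ]
      exact Finset.card_le_card (Finset.subset_univ _)
    have hENat : Fintype.card E ≤ ∑ i : Fin n, vertexDegree head tail i.succ := by
      have hds : ∑ i : Fin n, vertexDegree head tail i.succ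
          = ∑ i : Fin n, (Finset.univ.filter fun e => head e = i.succ).card
            + ∑ i : Fin n, (Finset.univ.filter fun e => tail e = i.succ).card := by
        rw [← Finset.sum_add_distrib]
        exact Finset.sum_congr rfl fun i _ => degree_split head tail hloop i.succ
      rw [Finset.card_univ] at hh ht
      omega
    rw [hT]
    push_cast
    exact_mod_cast Nat.cast_le.2 hENat
  -- RHS is nonnegative
  have hrhs : (0:ℝ) ≤ 1 - ((κ:ℝ)/T)^2 := by
    have h1 : (κ:ℝ)/T ≤ 1 := (div_le_one hTpos).2 hκT
    have h2 : (0:ℝ) ≤ (κ:ℝ)/T := by positivity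
    nlinarith
  -- main bound on each eigenvalue
  unfold specRad
  apply Real.sSup_le _ hrhs
  rintro x ⟨μ, rfl, heig⟩
  obtain ⟨v, hv⟩ := heig.exists_hasEigenvector
  have hvne : v ≠ 0 := hv.2
  have hmv : M.mulVec v = μ • v := by
    have h := hv.apply_eq_smul
    rwa [Matrix.toLin'_apply] at h
  obtain ⟨i₀v, hi₀v⟩ : ∃ i, v i ≠ 0 := by
    by_contra h
    push_neg at h
    exact hvne (funext h)
  -- extended vector
  set w : Fin (n+1) → ℝ := Fin.cases 0 v with hw
  have hw0 : w 0 = 0 := by rw [hw]; exact Fin.cases_zero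
  have hwsucc : ∀ i : Fin n, w i.succ = v i := fun i => by rw [hw]; exact Fin.cases_succ i
  -- incidence sums
  have hg : ∀ e : E, ∑ i : Fin n, A i e * v i = w (head e) - w (tail e) := by
    intro e
    have hterm : ∀ i : Fin n, A i e * v i
        = (if head e = i.succ then v i else 0) - (if tail e = i.succ then v i else 0) := by
      intro i
      rw [hA]
      by_cases h1 : head e = i.succ <;> by_cases h2 : tail e = i.succ
      · exact absurd (h1.trans h2.symm) (hloop e)
      all_goals simp [h1, h2]
    simp_rw [hterm]
    rw [Finset.sum_sub_distrib, sum_ite_succ_eq, sum_ite_succ_eq, hw]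
  have hg2 : ∀ e : E, ∑ i : Fin n, v i * A i e = w (head e) - w (tail e) := by
    intro e
    rw [← hg e]
    exact Finset.sum_congr rfl fun i _ => mul_comm _ _
  -- D is invertible
  have hdetD : IsUnit D.det := by
    rw [hD, Matrix.det_diagonal]
    exact isUnit_iff_ne_zero.2 (ne_of_gt (Finset.prod_pos fun i _ => hdegposR i))
  have hDM : D * M = D - A * Aᵀ := by
    rw [hM, mul_sub, mul_one, ← mul_assoc, Matrix.mul_nonsing_inv _ hdetD, one_mul]
  have hLv : (A * Aᵀ).mulVec v = D.mulVec v - μ • D.mulVec v := by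
    have h1 : (D * M).mulVec v = μ • D.mulVec v := by
      rw [← Matrix.mulVec_mulVec, hmv, Matrix.mulVec_smul]
    rw [hDM, Matrix.sub_mulVec] at h1
    rw [← h1]
    abel
  set Q := v ⬝ᵥ D.mulVec v with hQdef
  have hQ' : Q = ∑ i : Fin n, (vertexDegree head tail i.succ : ℝ) * v i ^ 2 := by
    rw [hQdef, hD]
    simp only [dotProduct, Matrix.mulVec_diagonal]
    exact Finset.sum_congr rfl fun i _ => by ring
  have hQpos : 0 < Q := by
    rw [hQ']
    refine Finset.sum_pos' (fun i _ => by positivity) ⟨i₀v, Finset.mem_univ _, ?_⟩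
    have h1 : 0 < v i₀v ^ 2 := by positivity
    exact mul_pos (hdegposR i₀v) h1
  -- Rayleigh identities
  have hP1 : v ⬝ᵥ (A * Aᵀ).mulVec v = ∑ e : E, (w (head e) - w (tail e))^2 := by
    rw [← Matrix.mulVec_mulVec, Matrix.dotProduct_mulVec]
    simp only [dotProduct, Matrix.vecMul, Matrix.mulVec, Matrix.transpose_apply]
    refine Finset.sum_congr rfl fun e _ => ?_
    rw [hg e, hg2 e]
    ring
  have hRay1 : ∑ e : E, (w (head e) - w (tail e))^2 = (1 - μ) * Q := by
    rw [← hP1, hLv, dotProduct_sub, dotProduct_smul, smul_eq_mul, hQdef]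
    ring
  have hEnergy : ∑ e : E, (w (head e)^2 + w (tail e)^2) = Q := by
    rw [Finset.sum_add_distrib, fiber_sum head (fun x => w x ^ 2),
      fiber_sum tail (fun x => w x ^ 2), ← Finset.sum_add_distrib]
    have hstep : ∀ x : Fin (n+1),
        ((Finset.univ.filter fun e => head e = x).card : ℝ) * w x ^ 2
          + ((Finset.univ.filter fun e => tail e = x).card : ℝ) * w x ^ 2
        = (vertexDegree head tail x : ℝ) * w x ^ 2 := by
      intro x
      rw [degree_split head tail hloop x]
      push_cast
      ring
    rw [Finset.sum_congr rfl fun x _ => hstep x]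
    rw [Fin.sum_univ_succ, hw0]
    rw [hQ']
    simp only [hwsucc]
    ring
  have hRay2 : ∑ e : E, (w (head e) + w (tail e))^2 = (1 + μ) * Q := by
    have hid : ∀ e : E, (w (head e) + w (tail e))^2
        = 2 * (w (head e)^2 + w (tail e)^2) - (w (head e) - w (tail e))^2 :=
      fun e => by ring
    rw [Finset.sum_congr rfl fun e _ => hid e, Finset.sum_sub_distrib,
      ← Finset.mul_sum, hEnergy, hRay1]
    ring
  have hs1 : 0 ≤ (1 - μ) * Q := by
    rw [← hRay1]; positivity
  have hs2 : 0 ≤ (1 + μ) * Q := by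
    rw [← hRay2]; positivity
  -- the maximizing vertex
  obtain ⟨m, -, hmax⟩ := Finset.exists_max_image Finset.univ (fun x => |w x|)
    ⟨0, Finset.mem_univ 0⟩
  set um := |w m| with hum
  have humax : ∀ x, |w x| ≤ um := fun x => hmax x (Finset.mem_univ x)
  have humpos : 0 < um := by
    have h1 : 0 < |v i₀v| := abs_pos.2 hi₀v
    have h2 : |v i₀v| ≤ um := by
      have := humax i₀v.succ
      rwa [hwsucc] at this
    linarith
  have hQle : Q ≤ T * um^2 := by
    rw [hQ', hT, Finset.sum_mul]
    refine Finset.sum_le_sum fun i _ => ?_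
    have h1 : |v i| ≤ um := by
      have := humax i.succ
      rwa [hwsucc] at this
    have h2 : v i ^ 2 ≤ um ^ 2 := by
      nlinarith [abs_nonneg (v i), sq_abs (v i)]
    exact mul_le_mul_of_nonneg_left h2 (hdegposR i).le
  -- coarea bounds
  have hco := coarea head tail hcut (fun x => |w x|)
    (show |w 0| = 0 by rw [hw0]; exact abs_zero) (fun i => abs_nonneg _) m
  have ha1 : (κ:ℝ) * um ≤ ∑ e : E, |w (head e) - w (tail e)| := by
    refine le_trans hco (Finset.sum_le_sum fun e _ => ?_)
    exact abs_abs_sub_abs_le_abs_sub _ _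
  have ha2 : (κ:ℝ) * um ≤ ∑ e : E, |w (head e) + w (tail e)| := by
    refine le_trans hco (Finset.sum_le_sum fun e _ => ?_)
    have h := abs_abs_sub_abs_le_abs_sub (w (head e)) (-(w (tail e)))
    simpa [sub_neg_eq_add] using h
  -- Cauchy–Schwarz
  have key1 : (κ:ℝ)^2 * um^2 ≤ T * ((1 - μ) * Q) := by
    have b1 : ((κ:ℝ) * um)^2 ≤ (∑ e : E, |w (head e) - w (tail e)|)^2 :=
      pow_le_pow_left₀ (by positivity) ha1 2
    have b2 := cs_bound (fun e => w (head e) - w (tail e))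
    rw [hRay1] at b2
    have b3 : (Fintype.card E : ℝ) * ((1 - μ) * Q) ≤ T * ((1 - μ) * Q) :=
      mul_le_mul_of_nonneg_right hET hs1
    calc (κ:ℝ)^2 * um^2 = ((κ:ℝ) * um)^2 := by ring
      _ ≤ (∑ e : E, |w (head e) - w (tail e)|)^2 := b1
      _ ≤ (Fintype.card E : ℝ) * ((1 - μ) * Q) := b2
      _ ≤ T * ((1 - μ) * Q) := b3
  have key2 : (κ:ℝ)^2 * um^2 ≤ T * ((1 + μ) * Q) := by
    have b1 : ((κ:ℝ) * um)^2 ≤ (∑ e : E, |w (head e) + w (tail e)|)^2 :=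
      pow_le_pow_left₀ (by positivity) ha2 2
    have b2 := cs_bound (fun e => w (head e) + w (tail e))
    rw [hRay2] at b2
    have b3 : (Fintype.card E : ℝ) * ((1 + μ) * Q) ≤ T * ((1 + μ) * Q) :=
      mul_le_mul_of_nonneg_right hET hs2
    calc (κ:ℝ)^2 * um^2 = ((κ:ℝ) * um)^2 := by ring
      _ ≤ (∑ e : E, |w (head e) + w (tail e)|)^2 := b1
      _ ≤ (Fintype.card E : ℝ) * ((1 + μ) * Q) := b2
      _ ≤ T * ((1 + μ) * Q) := b3
  -- conclude
  have h1μ : 0 ≤ 1 - μ := by nlinarith [hQpos, hs1]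
  have h2μ : 0 ≤ 1 + μ := by nlinarith [hQpos, hs2]
  have hstep1 : (κ:ℝ)^2 * um^2 ≤ (1 - μ) * (T^2 * um^2) := by
    calc (κ:ℝ)^2 * um^2 ≤ T * ((1 - μ) * Q) := key1
      _ ≤ T * ((1 - μ) * (T * um^2)) := by
          apply mul_le_mul_of_nonneg_left _ hTpos.le
          exact mul_le_mul_of_nonneg_left hQle h1μ
      _ = (1 - μ) * (T^2 * um^2) := by ring
  have hstep2 : (κ:ℝ)^2 * um^2 ≤ (1 + μ) * (T^2 * um^2) := by
    calc (κ:ℝ)^2 * um^2 ≤ T * ((1 + μ) * Q) := key2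
      _ ≤ T * ((1 + μ) * (T * um^2)) := by
          apply mul_le_mul_of_nonneg_left _ hTpos.le
          exact mul_le_mul_of_nonneg_left hQle h2μ
      _ = (1 + μ) * (T^2 * um^2) := by ring
  have hpos2 : (0:ℝ) < T^2 * um^2 := by positivity
  have hc1 : ((κ:ℝ)/T)^2 ≤ 1 - μ := by
    rw [← mul_le_mul_iff_of_pos_right hpos2]
    calc ((κ:ℝ)/T)^2 * (T^2 * um^2) = (κ:ℝ)^2 * um^2 := by
          field_simp
      _ ≤ (1 - μ) * (T^2 * um^2) := hstep1
  have hc2 : ((κ:ℝ)/T)^2 ≤ 1 + μ := by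
    rw [← mul_le_mul_iff_of_pos_right hpos2]
    calc ((κ:ℝ)/T)^2 * (T^2 * um^2) = (κ:ℝ)^2 * um^2 := by
          field_simp
      _ ≤ (1 + μ) * (T^2 * um^2) := hstep2
  rw [abs_le]
  constructor
  · linarith
  · linarith
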